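/- The only rational points on the elliptic curve E: y² = x³ + 2x (i.e., y² = x(x² + 2)) are (0, 0) and the point at infinity. -/

import Mathlib

set_option linter.unreachableTactic false
set_option linter.unusedTactic false
lemma zmod8_M1 : ∀ t k l : ZMod 8, t^2 ≠ (2*k+1)^4 + 2*(2*l+1)^4 := by decide

lemma zmod8_M2 : ∀ k l f : ZMod 8, (2*k+1)^2 + (2*l+1)^4 ≠ 8*f^4 := by decide

lemma coprime_two_of_odd {a : ℤ} (h : Odd a) : IsCoprime a 2 := by
  obtain ⟨k, rfl⟩ := h; exact ⟨1, -k, by ring⟩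

lemma coprime_pow2_of_odd {a : ℤ} (h : Odd a) (n : ℕ) : IsCoprime a (2^n) :=
  (coprime_two_of_odd h).pow_right

lemma pow4_pos {c : ℤ} (hc : c ≠ 0) : 0 < c^4 :=
  lt_of_le_of_ne (by positivity) (Ne.symm (pow_ne_zero 4 hc))

lemma pow4_of_coprime {a b c : ℤ} (h : IsCoprime a b) (heq : a * b = c^4) (ha : 0 < a) :
    ∃ d, a = d^4 := by
  obtain ⟨d, hd⟩ := exists_associated_pow_of_mul_eq_pow' h heq
  rw [Int.associated_iff] at hd
  rcases hd with hd | hd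
  · exact ⟨d, hd.symm⟩
  · exfalso; nlinarith [pow_nonneg (abs_nonneg d) 4, sq_abs d, sq_nonneg (d^2)]

-- integer versions of the mod-8 obstructions
lemma M1 {t u e : ℤ} (hu : Odd u) (he : Odd e) : t^2 ≠ u^4 + 2*e^4 := by
  intro h
  obtain ⟨k, hk⟩ := hu; obtain ⟨l, hl⟩ := he
  apply zmod8_M1 (t : ZMod 8) (k : ZMod 8) (l : ZMod 8)
  have : ((t^2 : ℤ) : ZMod 8) = ((u^4 + 2*e^4 : ℤ) : ZMod 8) := by exact_mod_cast congrArg _ h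
  push_cast [hk, hl] at this
  push_cast
  convert this using 2 <;> ring

lemma M2 {u e f : ℤ} (hu : Odd u) (he : Odd e) : u^2 + e^4 ≠ 8*f^4 := by
  intro h
  obtain ⟨k, hk⟩ := hu; obtain ⟨l, hl⟩ := he
  apply zmod8_M2 (k : ZMod 8) (l : ZMod 8) (f : ZMod 8)
  have : ((u^2 + e^4 : ℤ) : ZMod 8) = ((8*f^4 : ℤ) : ZMod 8) := by exact_mod_cast congrArg _ h
  push_cast [hk, hl] at this
  push_cast
  convert this using 2 <;> ring

-- shared ending of the two subcases of round 2
lemma finish {g a b V : ℤ} (hg : Odd g) (ha : Odd a) (hab : IsCoprime a b)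
    (heq : a^4 + 2*b^4 = g^2) (hV : V^4 = (g*a*b)^4) (hVne : V ≠ 0) (hbne : b ≠ 0) :
    ∃ u' v' z' : ℤ, Odd u' ∧ IsCoprime u' v' ∧ v' ≠ 0 ∧
      z'^2 = u'^4 + 32*v'^4 ∧ v'.natAbs < V.natAbs := by
  have hbev : Even b := by
    rcases Int.even_or_odd b with hb | hb
    · exact hb
    · exact absurd heq.symm (M1 ha hb)
  obtain ⟨b1, hb1⟩ := hbev
  refine ⟨a, b1, g, ha, ?_, ?_, ?_, ?_⟩
  · exact hab.of_isCoprime_of_dvd_right ⟨2, by rw [hb1]; ring⟩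
  · intro h0; exact hbne (by rw [hb1, h0]; ring)
  · rw [← heq, hb1]; ring
  · have hnat : V.natAbs = (g*a*b).natAbs := by
      have h4 : V.natAbs^4 = (g*a*b).natAbs^4 := by
        rw [← Int.natAbs_pow, ← Int.natAbs_pow, hV]
      exact Nat.pow_left_injective (by norm_num) h4
    obtain ⟨k, hk⟩ := hg
    obtain ⟨l, hl⟩ := ha
    have hga : 1 ≤ g.natAbs := by omega
    have haa : 1 ≤ a.natAbs := by omega
    have hbb : b.natAbs = 2 * b1.natAbs := by omega
    have hVb : b.natAbs ≤ V.natAbs := by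
      rw [hnat, Int.natAbs_mul, Int.natAbs_mul]
      calc b.natAbs = 1 * 1 * b.natAbs := by ring
        _ ≤ g.natAbs * a.natAbs * b.natAbs :=
            Nat.mul_le_mul (Nat.mul_le_mul hga haa) (le_refl _)
    have hVpos : 0 < V.natAbs := Int.natAbs_pos.mpr hVne
    omega

lemma step {u v z : ℤ} (hu : Odd u) (hco : IsCoprime u v) (hv : v ≠ 0)
    (h : z^2 = u^4 + 32*v^4) :
    ∃ u' v' z' : ℤ, Odd u' ∧ IsCoprime u' v' ∧ v' ≠ 0 ∧
      z'^2 = u'^4 + 32*v'^4 ∧ v'.natAbs < v.natAbs := by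
  have hv4 : 0 < v^4 := pow4_pos hv
  -- replace z by |z|
  set Z : ℤ := |z| with hZdef
  have hZnn : 0 ≤ Z := abs_nonneg z
  have hZsq : Z^2 = u^4 + 32*v^4 := by rw [hZdef, sq_abs]; exact h
  have hU2 : Odd (u^2) := hu.pow
  have hU4 : Odd (u^4) := hu.pow
  have hzodd : Odd Z := by
    have h2 : Odd (Z^2) := by
      rw [hZsq]
      exact hU4.add_even ⟨16*v^4, by ring⟩
    rcases Int.even_or_odd Z with hZ | hZ
    · exact absurd (by rw [sq]; exact hZ.mul_right Z : Even (Z^2))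
        (Int.not_even_iff_odd.mpr h2)
    · exact hZ
  have hZpos : 0 < Z := by
    rcases hzodd with ⟨k, hk⟩
    omega
  obtain ⟨P, hP⟩ : Even (Z - u^2) := hzodd.sub_odd hU2
  obtain ⟨Q, hQ⟩ : Even (Z + u^2) := hzodd.add_odd hU2
  have hPQ : P * Q = 8 * v^4 := by
    have h4 : (4:ℤ) * (P*Q) = 4 * (8*v^4) := by nlinarith [hZsq]
    exact mul_left_cancel₀ (by norm_num) h4
  have hsum : P + Q = Z := by linarith
  have hdiff : Q - P = u^2 := by linarith
  have hQpos : 0 < Q := by nlinarith [sq_nonneg u]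
  -- coprimality of P and Q
  have hPQco : IsCoprime P Q := by
    rw [Int.isCoprime_iff_gcd_eq_one]
    set g : ℕ := Int.gcd P Q with hgdef
    have hgP : (g:ℤ) ∣ P := Int.gcd_dvd_left P Q
    have hgQ : (g:ℤ) ∣ Q := Int.gcd_dvd_right P Q
    have hgZ : (g:ℤ) ∣ Z := hsum ▸ dvd_add hgP hgQ
    have hgu2 : (g:ℤ) ∣ u^2 := hdiff ▸ dvd_sub hgQ hgP
    have hgodd : Odd (g:ℤ) := by
      rcases Int.even_or_odd (g:ℤ) with hge | hgo
      · exfalso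
        obtain ⟨m, hm⟩ := hge
        obtain ⟨k, hk⟩ := hgZ
        have hZeven : Even Z := ⟨m*k, by rw [hk, hm]; ring⟩
        obtain ⟨t, ht⟩ := hZeven
        obtain ⟨l, hl⟩ := hzodd
        omega
      · exact hgo
    have hgv : (g:ℤ) ∣ v^4 := by
      have h8 : (g:ℤ) ∣ 2^3 * v^4 := by
        have h' : (g:ℤ) ∣ P * Q := dvd_mul_of_dvd_left hgP Q
        rw [hPQ] at h'
        exact (by norm_num : (8:ℤ)*v^4 = 2^3*v^4) ▸ h'
      exact (coprime_pow2_of_odd hgodd 3).dvd_of_dvd_mul_left h8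
    have hunit : IsUnit ((g:ℤ)) := (hco.pow).isUnit_of_dvd' hgu2 hgv
    rw [Int.isUnit_iff] at hunit
    omega
  rcases Int.even_or_odd P with hPev | hPodd
  · -- P even, Q odd : the descent case
    have hQodd : Odd Q := by
      have hQeq : Q = Z - P := by linarith
      rw [hQeq]; exact hzodd.sub_even hPev
    -- 8 divides P
    have h8PQ : (2:ℤ)^3 ∣ P * Q := ⟨v^4, by rw [hPQ]; ring⟩
    obtain ⟨n', hn'⟩ : (2:ℤ)^3 ∣ P :=
      ((coprime_pow2_of_odd hQodd 3).symm).dvd_of_dvd_mul_right h8PQ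
    have hn'8 : P = 8 * n' := by rw [hn']; norm_num
    have hQn : Q * n' = v^4 := by
      have h8' : (8:ℤ) * (Q * n') = 8 * v^4 := by rw [← hPQ, hn'8]; ring
      exact mul_left_cancel₀ (by norm_num) h8'
    have hco2 : IsCoprime Q n' :=
      hPQco.symm.of_isCoprime_of_dvd_right ⟨8, by rw [hn'8]; ring⟩
    have hn'pos : 0 < n' := by nlinarith
    obtain ⟨g, hg⟩ := pow4_of_coprime hco2 hQn hQpos
    obtain ⟨f, hf⟩ := pow4_of_coprime hco2.symm (by rw [mul_comm]; exact hQn) hn'pos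
    have hgodd : Odd g := by
      rcases Int.even_or_odd g with hge | hgo
      · exfalso
        have : Even Q := by
          obtain ⟨m, hm⟩ := hge
          exact ⟨8*m^4, by rw [hg, hm]; ring⟩
        exact (Int.not_even_iff_odd.mpr hQodd) this
      · exact hgo
    have hfne : f ≠ 0 := by
      intro h0; rw [h0] at hf; norm_num at hf; omega
    have hf4pos : 0 < f^4 := pow4_pos hfne
    have heq2 : g^4 - 8*f^4 = u^2 := by rw [← hg, ← hf]; linarith
    -- coprime g f
    have hgf : IsCoprime g f := by
      have h1 : IsCoprime (g^4) (f^4) := by rw [← hg, ← hf]; exact hco2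
      exact (h1.of_isCoprime_of_dvd_left (dvd_pow_self g (by norm_num))).of_isCoprime_of_dvd_right
        (dvd_pow_self f (by norm_num))
    -- coprime u g
    have hug : IsCoprime u g := by
      rw [Int.isCoprime_iff_gcd_eq_one]
      set w : ℕ := Int.gcd u g with hwdef
      have hwu : (w:ℤ) ∣ u := Int.gcd_dvd_left u g
      have hwg : (w:ℤ) ∣ g := Int.gcd_dvd_right u g
      have hwodd : Odd (w:ℤ) := by
        rcases Int.even_or_odd (w:ℤ) with hwe | hwo
        · exfalso
          obtain ⟨m, hm⟩ := hwe
          obtain ⟨k, hk⟩ := hwu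
          have : Even u := ⟨m*k, by rw [hk, hm]; ring⟩
          obtain ⟨t, ht⟩ := this
          obtain ⟨l, hl⟩ := hu
          omega
        · exact hwo
      have hwf : (w:ℤ) ∣ f^4 := by
        have h1 : (w:ℤ) ∣ 2^3 * f^4 := by
          have hd : (w:ℤ) ∣ g^4 - u^2 := dvd_sub (hwg.pow (by norm_num)) (hwu.pow (by norm_num))
          have h2 : (2:ℤ)^3 * f^4 = g^4 - u^2 := by linarith
          rw [h2]
          exact hd
        exact (coprime_pow2_of_odd hwodd 3).dvd_of_dvd_mul_left h1
      have hunit : IsUnit ((w:ℤ)) := (hgf.pow_right).isUnit_of_dvd' hwg hwf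
      rw [Int.isUnit_iff] at hunit
      omega
    -- Round 2: factor g^4 - u^2 = 8 f^4
    have hg2odd : Odd (g^2) := hgodd.pow
    obtain ⟨R, hR⟩ : Even (g^2 - u) := hg2odd.sub_odd hu
    obtain ⟨S, hS⟩ : Even (g^2 + u) := hg2odd.add_odd hu
    have e1 : g^2 - u = 2*R := by linarith
    have e2 : g^2 + u = 2*S := by linarith
    have h4' : (2*R)*(2*S) = 8*f^4 := by rw [← e1, ← e2]; linear_combination heq2
    have hRS : R * S = 2*f^4 := by
      have h4'' : (4:ℤ)*(R*S) = 4*(2*f^4) := by linear_combination h4'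
      exact mul_left_cancel₀ (by norm_num) h4''
    have hsum2 : R + S = g^2 := by linarith
    have hdiff2 : S - R = u := by linarith
    have habs : |u| < g^2 := by
      have h1 : u^2 < (g^2)^2 := by nlinarith
      nlinarith [sq_abs u, abs_nonneg u]
    have hSpos : 0 < S := by
      have := neg_abs_le u; linarith
    have hRpos : 0 < R := by
      have := le_abs_self u; linarith
    have hRSco : IsCoprime R S := by
      rw [Int.isCoprime_iff_gcd_eq_one]
      set w2 : ℕ := Int.gcd R S with hw2def
      have hwR : (w2:ℤ) ∣ R := Int.gcd_dvd_left R S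
      have hwS : (w2:ℤ) ∣ S := Int.gcd_dvd_right R S
      have hwg2 : (w2:ℤ) ∣ g^2 := hsum2 ▸ dvd_add hwR hwS
      have hwu : (w2:ℤ) ∣ u := hdiff2 ▸ dvd_sub hwS hwR
      have hunit : IsUnit ((w2:ℤ)) := (hug.pow_right).isUnit_of_dvd' hwu hwg2
      rw [Int.isUnit_iff] at hunit
      omega
    rcases Int.even_or_odd R with hRev | hRodd
    · -- R even, S odd
      have hSodd : Odd S := by
        have hSe : S = g^2 - R := by linarith
        rw [hSe]; exact hg2odd.sub_even hRev
      obtain ⟨R'', hR''⟩ : (2:ℤ) ∣ R :=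
        ((coprime_two_of_odd hSodd).symm).dvd_of_dvd_mul_right ⟨f^4, hRS⟩
      have hSR : S * R'' = f^4 := by
        have h2' : (2:ℤ)*(S*R'') = 2*f^4 := by rw [← hRS, hR'']; ring
        exact mul_left_cancel₀ (by norm_num) h2'
      have hcoSR : IsCoprime S R'' :=
        hRSco.symm.of_isCoprime_of_dvd_right ⟨2, by rw [hR'']; ring⟩
      have hR''pos : 0 < R'' := by linarith
      obtain ⟨a, ha⟩ := pow4_of_coprime hcoSR hSR hSpos
      obtain ⟨b, hb⟩ := pow4_of_coprime hcoSR.symm (by rw [mul_comm]; exact hSR) hR''pos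
      have haodd : Odd a := by
        rcases Int.even_or_odd a with hae | hao
        · exfalso
          obtain ⟨m, hm⟩ := hae
          exact (Int.not_even_iff_odd.mpr hSodd) ⟨8*m^4, by rw [ha, hm]; ring⟩
        · exact hao
      have hbne : b ≠ 0 := by
        intro h0; rw [h0] at hb; norm_num at hb; omega
      have hab : IsCoprime a b := by
        have h1 : IsCoprime (a^4) (b^4) := by rw [← ha, ← hb]; exact hcoSR
        exact (h1.of_isCoprime_of_dvd_left (dvd_pow_self a (by norm_num))).of_isCoprime_of_dvd_right
          (dvd_pow_self b (by norm_num))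
      have heqf : a^4 + 2*b^4 = g^2 := by
        rw [← ha, ← hb]; linarith
      have hv4e : v^4 = (g*a*b)^4 := by
        have t1 : v^4 = g^4 * f^4 := by rw [← hQn, hg, hf]
        have t2 : f^4 = a^4 * b^4 := by rw [← hSR, ha, hb]
        rw [t1, t2]; ring
      exact finish hgodd haodd hab heqf hv4e hv hbne
    · -- R odd, S even
      obtain ⟨S'', hS''⟩ : (2:ℤ) ∣ S :=
        ((coprime_two_of_odd hRodd).symm).dvd_of_dvd_mul_left ⟨f^4, hRS⟩
      have hRS'' : R * S'' = f^4 := by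
        have h2' : (2:ℤ)*(R*S'') = 2*f^4 := by rw [← hRS, hS'']; ring
        exact mul_left_cancel₀ (by norm_num) h2'
      have hcoRS : IsCoprime R S'' :=
        hRSco.of_isCoprime_of_dvd_right ⟨2, by rw [hS'']; ring⟩
      have hS''pos : 0 < S'' := by linarith
      obtain ⟨a, ha⟩ := pow4_of_coprime hcoRS hRS'' hRpos
      obtain ⟨b, hb⟩ := pow4_of_coprime hcoRS.symm (by rw [mul_comm]; exact hRS'') hS''pos
      have haodd : Odd a := by
        rcases Int.even_or_odd a with hae | hao
        · exfalso
          obtain ⟨m, hm⟩ := hae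
          exact (Int.not_even_iff_odd.mpr hRodd) ⟨8*m^4, by rw [ha, hm]; ring⟩
        · exact hao
      have hbne : b ≠ 0 := by
        intro h0; rw [h0] at hb; norm_num at hb; omega
      have hab : IsCoprime a b := by
        have h1 : IsCoprime (a^4) (b^4) := by rw [← ha, ← hb]; exact hcoRS
        exact (h1.of_isCoprime_of_dvd_left (dvd_pow_self a (by norm_num))).of_isCoprime_of_dvd_right
          (dvd_pow_self b (by norm_num))
      have heqf : a^4 + 2*b^4 = g^2 := by
        rw [← ha, ← hb]; linarith
      have hv4e : v^4 = (g*a*b)^4 := by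
        have t1 : v^4 = g^4 * f^4 := by rw [← hQn, hg, hf]
        have t2 : f^4 = a^4 * b^4 := by rw [← hRS'', ha, hb]
        rw [t1, t2]; ring
      exact finish hgodd haodd hab heqf hv4e hv hbne
  · -- P odd : contradiction via mod 8
    have h8PQ : (2:ℤ)^3 ∣ P * Q := ⟨v^4, by rw [hPQ]; ring⟩
    obtain ⟨Q'', hQ''⟩ : (2:ℤ)^3 ∣ Q :=
      ((coprime_pow2_of_odd hPodd 3).symm).dvd_of_dvd_mul_left h8PQ
    have hQ8 : Q = 8 * Q'' := by rw [hQ'']; norm_num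
    have hPQ'' : P * Q'' = v^4 := by
      have h8' : (8:ℤ) * (P * Q'') = 8 * v^4 := by rw [← hPQ, hQ8]; ring
      exact mul_left_cancel₀ (by norm_num) h8'
    have hco2 : IsCoprime P Q'' :=
      hPQco.of_isCoprime_of_dvd_right ⟨8, by rw [hQ8]; ring⟩
    have hQ''pos : 0 < Q'' := by linarith
    have hPpos : 0 < P := by nlinarith
    obtain ⟨e, he⟩ := pow4_of_coprime hco2 hPQ'' hPpos
    obtain ⟨f, hff⟩ := pow4_of_coprime hco2.symm (by rw [mul_comm]; exact hPQ'') hQ''pos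
    have heodd : Odd e := by
      rcases Int.even_or_odd e with hee | heo
      · exfalso
        have : Even P := by
          obtain ⟨m, hm⟩ := hee
          exact ⟨8*m^4, by rw [he, hm]; ring⟩
        exact (Int.not_even_iff_odd.mpr hPodd) this
      · exact heo
    exfalso
    apply M2 hu heodd (f := f)
    have h1 : u^2 = Q - P := hdiff.symm
    rw [hQ8, hff, he] at h1
    linarith

lemma no_sol : ∀ (N : ℕ) (u v z : ℤ), v.natAbs = N → Odd u → IsCoprime u v →
    z^2 = u^4 + 32*v^4 → v = 0 := by
  intro N
  induction N using Nat.strong_induction_on with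
  | _ N ih =>
    intro u v z hN hu hco h
    by_contra hv
    obtain ⟨u', v', z', hu', hco', hv', h', hlt⟩ := step hu hco hv h
    exact hv' (ih v'.natAbs (hN ▸ hlt) u' v' z' rfl hu' hco' h')

lemma main_int (n e p : ℤ) (he : e ≠ 0) (hco : IsCoprime n e)
    (h : p^2 = n * (n^2 + 2*e^4)) : n = 0 := by
  by_contra hn
  have he4 : 0 < e^4 := pow4_pos he
  have hfac : 0 < n^2 + 2*e^4 := by nlinarith [sq_nonneg n]
  have hnpos : 0 < n := by
    rcases lt_trichotomy n 0 with h1 | h1 | h1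
    · nlinarith [sq_nonneg p]
    · exact absurd h1 hn
    · exact h1
  rcases Int.even_or_odd n with hnev | hnodd
  · -- n even : n = 2α
    obtain ⟨α, hα⟩ := hnev
    have hα2 : n = 2*α := by linarith
    have heodd : Odd e := by
      rcases Int.even_or_odd e with hee | heo
      · exfalso
        obtain ⟨m, hm⟩ := hee
        have hunit : IsUnit (2:ℤ) :=
          hco.isUnit_of_dvd' ⟨α, hα2⟩ ⟨m, by rw [hm]; ring⟩
        rw [Int.isUnit_iff] at hunit
        omega
      · exact heo
    have hpev : Even p := by
      rcases Int.even_or_odd p with hpe | hpo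
      · exact hpe
      · exfalso
        obtain ⟨k, hk⟩ := hpo
        have h2 : p^2 = 4*(α*(2*α^2+e^4)) := by rw [h, hα2]; ring
        have h3 : 4*(α*(2*α^2+e^4) - k^2 - k) = 1 := by
          linear_combination -h2 + (p+2*k+1)*hk
        omega
    obtain ⟨γ, hγ⟩ := hpev
    have hγ2 : p = 2*γ := by linarith
    have hkey : γ^2 = α * (2*α^2 + e^4) := by
      have h4 : (4:ℤ)*(γ^2) = 4*(α * (2*α^2+e^4)) := by
        rw [show (4:ℤ)*γ^2 = (2*γ)^2 by ring, ← hγ2, h, hα2]; ring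
      exact mul_left_cancel₀ (by norm_num) h4
    have hcoae : IsCoprime α e := hco.of_isCoprime_of_dvd_left ⟨2, by rw [hα2]; ring⟩
    have hco2 : IsCoprime α (2*α^2 + e^4) := by
      have h1 : IsCoprime α (e^4 + α*(2*α)) := (hcoae.pow_right).add_mul_left_right (2*α)
      have h2 : e^4 + α*(2*α) = 2*α^2 + e^4 := by ring
      rwa [h2] at h1
    have hαpos : 0 < α := by
      have hf2 : 0 < 2*α^2 + e^4 := by positivity
      rcases lt_trichotomy α 0 with h1 | h1 | h1
      · nlinarith [sq_nonneg γ]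
      · exfalso; rw [hα2, h1] at hnpos; norm_num at hnpos
      · exact h1
    obtain ⟨s, hs⟩ := Int.sq_of_isCoprime hco2 hkey.symm
    have hs' : α = s^2 := by
      rcases hs with hs | hs
      · exact hs
      · exfalso; nlinarith [sq_nonneg s]
    obtain ⟨t, ht⟩ := Int.sq_of_isCoprime hco2.symm (by rw [mul_comm]; exact hkey.symm)
    have ht' : 2*α^2 + e^4 = t^2 := by
      rcases ht with ht | ht
      · exact ht
      · exfalso; nlinarith [sq_nonneg t, sq_nonneg α]
    have hteq : t^2 = e^4 + 2*s^4 := by rw [← ht', hs']; ring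
    have hsev : Even s := by
      rcases Int.even_or_odd s with hse | hso
      · exact hse
      · exact absurd hteq (M1 heodd hso)
    obtain ⟨s1, hs1⟩ := hsev
    have hs12 : s = 2*s1 := by linarith
    have hcoes1 : IsCoprime e s1 := by
      have h1 : IsCoprime e (s^2) := (hcoae.symm).of_isCoprime_of_dvd_right ⟨1, by rw [hs']; ring⟩
      exact (h1.of_isCoprime_of_dvd_right (dvd_pow_self s (by norm_num))).of_isCoprime_of_dvd_right
        ⟨2, by rw [hs12]; ring⟩
    have hteq2 : t^2 = e^4 + 32*s1^4 := by rw [hteq, hs12]; ring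
    have hs10 : s1 = 0 := no_sol s1.natAbs e s1 t rfl heodd hcoes1 hteq2
    rw [hs10] at hs12; rw [hs12] at hs'; rw [hs'] at hαpos; norm_num at hαpos
  · -- n odd
    have hco2 : IsCoprime n (n^2 + 2*e^4) := by
      have h1 : IsCoprime n (2*e^4) := (coprime_two_of_odd hnodd).mul_right hco.pow_right
      have h2 : IsCoprime n (2*e^4 + n*n) := h1.add_mul_left_right n
      have h3 : 2*e^4 + n*n = n^2 + 2*e^4 := by ring
      rwa [h3] at h2
    obtain ⟨s, hs⟩ := Int.sq_of_isCoprime hco2 h.symm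
    have hs' : n = s^2 := by
      rcases hs with hs | hs
      · exact hs
      · exfalso; nlinarith [sq_nonneg s]
    obtain ⟨t, ht⟩ := Int.sq_of_isCoprime hco2.symm (by rw [mul_comm]; exact h.symm)
    have ht' : n^2 + 2*e^4 = t^2 := by
      rcases ht with ht | ht
      · exact ht
      · exfalso; nlinarith [sq_nonneg t, sq_nonneg n]
    have hsodd : Odd s := by
      rcases Int.even_or_odd s with hse | hso
      · exfalso
        obtain ⟨m, hm⟩ := hse
        have : Even n := ⟨2*m^2, by rw [hs', hm]; ring⟩
        obtain ⟨l, hl⟩ := this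
        obtain ⟨k, hk⟩ := hnodd
        omega
      · exact hso
    have hteq : t^2 = s^4 + 2*e^4 := by rw [← ht', hs']; ring
    have heev : Even e := by
      rcases Int.even_or_odd e with hee | heo
      · exact hee
      · exact absurd hteq (M1 hsodd heo)
    obtain ⟨e1, he1⟩ := heev
    have he12 : e = 2*e1 := by linarith
    have hcose1 : IsCoprime s e1 := by
      have h1 : IsCoprime (s^2) e := by rw [← hs']; exact hco
      exact (h1.of_isCoprime_of_dvd_left (dvd_pow_self s (by norm_num))).of_isCoprime_of_dvd_right
        ⟨2, by rw [he12]; ring⟩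
    have hteq2 : t^2 = s^4 + 32*e1^4 := by rw [hteq, he12]; ring
    have he10 : e1 = 0 := no_sol e1.natAbs s e1 t rfl hsodd hcose1 hteq2
    exact he (by omega)

theorem E_x_cubed_plus_two_x_rational_points (x y : ℚ) :
    y ^ 2 = x ^ 3 + 2 * x → x = 0 ∧ y = 0 := by
  intro h
  set n : ℤ := x.num with hn
  set d : ℤ := (x.den : ℤ) with hd
  set p : ℤ := y.num with hp
  set q : ℤ := (y.den : ℤ) with hq
  have hdpos : 0 < d := Int.natCast_pos.mpr x.pos
  have hqpos : 0 < q := Int.natCast_pos.mpr y.pos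
  have hdne : d ≠ 0 := ne_of_gt hdpos
  have hqne : q ≠ 0 := ne_of_gt hqpos
  -- clear denominators
  have hx : x = (n : ℚ) / (d : ℚ) := by rw [hn, hd]; exact_mod_cast (Rat.num_div_den x).symm
  have hy : y = (p : ℚ) / (q : ℚ) := by rw [hp, hq]; exact_mod_cast (Rat.num_div_den y).symm
  have hd0 : ((d : ℚ)) ≠ 0 := Int.cast_ne_zero.mpr hdne
  have hq0 : ((q : ℚ)) ≠ 0 := Int.cast_ne_zero.mpr hqne
  rw [hx, hy] at h
  field_simp at h
  have key0 : p^2 * (d^3 * d) = (n^3 * d + 2*n*d^3) * q^2 := by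
    have h' : p^2 * d^3 = q^2 * n * (n^2 + d^2*2) := by exact_mod_cast h
    linear_combination d * h'
  have key2 : p^2 * d^3 = n*(n^2 + 2*d^2) * q^2 := by
    have h5 : (p^2*d^3)*d = (n*(n^2+2*d^2)*q^2)*d := by linear_combination key0
    exact mul_right_cancel₀ hdne h5
  -- coprimality from reduced fractions
  have hconD : IsCoprime n d := by
    rw [Int.isCoprime_iff_gcd_eq_one, hn, hd, Int.gcd]
    simp only [Int.natAbs_natCast]
    exact x.reduced
  have hcoqp : IsCoprime q p := by
    rw [Int.isCoprime_iff_gcd_eq_one, hp, hq, Int.gcd]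
    simp only [Int.natAbs_natCast]
    exact Nat.coprime_comm.mp y.reduced
  -- q^2 = d^3
  have hq2d3 : q^2 ∣ d^3 := by
    have h1 : q^2 ∣ p^2 * d^3 := ⟨n*(n^2+2*d^2), by linear_combination key2⟩
    exact (hcoqp.pow).dvd_of_dvd_mul_left h1
  have hcod3 : IsCoprime (d^3) (n*(n^2+2*d^2)) := by
    have h1 : IsCoprime d (n*n + d*(2*d)) :=
      (hconD.symm.mul_right hconD.symm).add_mul_left_right (2*d)
    have h2 : n*n + d*(2*d) = n^2+2*d^2 := by ring
    rw [h2] at h1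
    exact (hconD.symm.mul_right h1).pow_left
  have hd3q2 : d^3 ∣ q^2 := by
    have h1 : d^3 ∣ (n*(n^2+2*d^2)) * q^2 := ⟨p^2, by linear_combination -key2⟩
    exact hcod3.dvd_of_dvd_mul_left h1
  have hq2 : q^2 = d^3 := Int.dvd_antisymm (by positivity) (by positivity) hq2d3 hd3q2
  -- d is a perfect square
  have hddq : d ∣ q := by
    rw [← Int.pow_dvd_pow_iff (two_ne_zero)]
    rw [hq2]
    exact ⟨d, by ring⟩
  obtain ⟨e, hqe⟩ := hddq
  have he2 : e^2 = d := by
    have h5 : d^2 * e^2 = d^2 * d := by linear_combination hq2 - (q + d*e)*hqe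
    exact mul_left_cancel₀ (pow_ne_zero 2 hdne) h5
  have hene : e ≠ 0 := by
    intro h0; rw [h0] at he2; norm_num at he2; exact hdne he2.symm
  have hp2 : p^2 = n*(n^2 + 2*e^4) := by
    have h5 : p^2*d^3 = (n*(n^2+2*d^2))*d^3 := by
      linear_combination key2 + (n*(n^2+2*d^2))*hq2
    have h6 := mul_right_cancel₀ (pow_ne_zero 3 hdne) h5
    rw [← he2] at h6
    linear_combination h6
  have hcone : IsCoprime n e :=
    hconD.of_isCoprime_of_dvd_right ⟨e, by rw [← he2]; ring⟩
  have hn0 : n = 0 := main_int n e p hene hcone hp2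
  have hx0 : x = 0 := Rat.num_eq_zero.mp hn0
  refine ⟨hx0, ?_⟩
  have hq20 : p^2 = 0 := by rw [hp2, hn0]; ring
  have hp0 : p = 0 := by
    have := pow_eq_zero_iff (n := 2) (by norm_num) |>.mp hq20
    exact this
  exact Rat.num_eq_zero.mp hp0
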